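/- For λ outside the segment [r − 2s, r + 2s], the roots α₁, α₂ of s·x² + (r − λ)x + s = 0 satisfy |α₁| < 1 < |α₂| (after suitable labeling); in particular neither root has modulus 1. -/

import Mathlib

open Set

/-- For λ outside the segment [r − 2s, r + 2s] the roots of
s x² + (r − λ) x + s have moduli on either side of 1; neither has modulus 1. -/
theorem stmt7 (r s lam α₁ α₂ : ℂ) (hs : s ≠ 0)
    (hlam : lam ∉ {l : ℂ | ∃ t ∈ Icc (-2 : ℝ) 2, l = r + t * s})
    (h₁ : s * α₁ ^ 2 + (r - lam) * α₁ + s = 0)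
    (h₂ : s * α₂ ^ 2 + (r - lam) * α₂ + s = 0)
    (hprod : α₁ * α₂ = 1) :
    ((‖α₁‖ < 1 ∧ 1 < ‖α₂‖) ∨ (‖α₂‖ < 1 ∧ 1 < ‖α₁‖)) ∧
      ‖α₁‖ ≠ 1 ∧ ‖α₂‖ ≠ 1 := by
  have hα₁0 : α₁ ≠ 0 := by
    intro h; rw [h, zero_mul] at hprod; exact one_ne_zero hprod.symm
  -- sum of roots
  have hsum : s * (α₁ + α₂) = lam - r := by
    have hα₂ : α₂ = α₁⁻¹ := eq_inv_of_mul_eq_one_left (by rw [mul_comm]; exact hprod)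
    rw [hα₂]
    field_simp
    linear_combination h₁
  have hne1 : ‖α₁‖ ≠ 1 := by
    intro h1
    -- then α₂ = conj α₁
    have hconj : α₂ = (starRingEnd ℂ) α₁ := by
      have hc : α₁ * (starRingEnd ℂ) α₁ = 1 := by
        rw [Complex.mul_conj]
        norm_cast
        rw [Complex.normSq_eq_norm_sq, h1]; norm_num
      exact mul_left_cancel₀ hα₁0 (hprod.trans hc.symm)
    set t : ℝ := 2 * α₁.re with ht
    have hsumt : α₁ + α₂ = (t : ℂ) := by
      rw [hconj, Complex.add_conj]
    refine hlam ⟨t, ⟨?_, ?_⟩, ?_⟩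
    · have := abs_le.mp (by
        have h := Complex.abs_re_le_norm α₁
        rw [h1] at h
        exact h)
      simp only [ht]; linarith [this.1]
    · have h := Complex.abs_re_le_norm α₁
      rw [h1] at h
      have := abs_le.mp h
      simp only [ht]; linarith [this.2]
    · rw [← hsumt] at *
      have : lam - r = (α₁ + α₂) * s := by rw [mul_comm]; exact hsum.symm
      rw [hsumt] at this
      linear_combination this
  have hmul : ‖α₁‖ * ‖α₂‖ = 1 := by
    rw [← norm_mul, hprod, norm_one]
  have hne2 : ‖α₂‖ ≠ 1 := by
    intro h2; rw [h2, mul_one] at hmul; exact hne1 hmul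
  have hpos : 0 < ‖α₁‖ := norm_pos_iff.mpr hα₁0
  refine ⟨?_, hne1, hne2⟩
  rcases lt_or_gt_of_ne hne1 with h | h
  · left; constructor
    · exact h
    · nlinarith
  · right; constructor
    · nlinarith
    · exact h
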